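/- Let X = (X_1,...,X_n) be a vector of independent random elements with values in a measurable space, and let X' be an independent copy of X. For A ⊆ [n] define X^A by replacing X_i with X_i' for i ∈ A. Then for any square-integrable real-valued functions g, h of X, Cov(g(X), h(X)) = (1/2) ∑_{A ⊊ [n]} k_{n,A} ∑_{j ∉ A} E[(g(X) − g(X^j)) (h(X^A) − h(X^{A ∪ {j}}))], where k_{n,A} = 1/(C(n,|A|)(n−|A|)). -/

import Mathlib

open Finset

-- double counting
lemma dbl_count {n m : ℕ} (F : Finset (Fin n) → ℝ) :
    ∑ A ∈ powersetCard m (univ : Finset (Fin n)), ∑ j ∈ Aᶜ, F (insert j A)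
      = (m + 1 : ℝ) * ∑ B ∈ powersetCard (m+1) (univ : Finset (Fin n)), F B := by
  rw [Finset.mul_sum]
  have hR : ∀ B ∈ powersetCard (m+1) (univ : Finset (Fin n)),
      (m + 1 : ℝ) * F B = ∑ j ∈ B, F B := by
    intro B hB
    rw [Finset.sum_const, (Finset.mem_powersetCard.1 hB).2]
    simp [nsmul_eq_mul]
  rw [Finset.sum_congr rfl hR]
  rw [Finset.sum_sigma', Finset.sum_sigma']
  refine Finset.sum_nbij' (fun p => ⟨insert p.2 p.1, p.2⟩) (fun p => ⟨p.1.erase p.2, p.2⟩)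
    ?_ ?_ ?_ ?_ ?_
  · rintro ⟨A, j⟩ hp
    simp only [Finset.mem_sigma, Finset.mem_powersetCard, Finset.mem_compl] at hp ⊢
    obtain ⟨⟨hAu, hAc⟩, hj⟩ := hp
    exact ⟨⟨Finset.subset_univ _, by rw [Finset.card_insert_of_notMem hj, hAc]⟩,
      Finset.mem_insert_self _ _⟩
  · rintro ⟨B, j⟩ hp
    simp only [Finset.mem_sigma, Finset.mem_powersetCard, Finset.mem_compl] at hp ⊢
    obtain ⟨⟨hBu, hBc⟩, hj⟩ := hp
    exact ⟨⟨Finset.subset_univ _, by rw [Finset.card_erase_of_mem hj, hBc]; rfl⟩,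
      Finset.notMem_erase _ _⟩
  · rintro ⟨A, j⟩ hp
    simp only [Finset.mem_sigma, Finset.mem_compl] at hp
    simp [Finset.erase_insert hp.2]
  · rintro ⟨B, j⟩ hp
    simp only [Finset.mem_sigma] at hp
    simp [Finset.insert_erase hp.2]
  · rintro ⟨A, j⟩ hp; rfl

lemma comb_telescope {n : ℕ} (F : Finset (Fin n) → ℝ) :
    ∑ A ∈ (Finset.univ : Finset (Fin n)).powerset.filter (· ≠ Finset.univ),
      (1 / ((n.choose A.card : ℝ) * (n - A.card))) * ∑ j ∈ Aᶜ, (F A - F (insert j A))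
      = F ∅ - F Finset.univ := by
  set f : Finset (Fin n) → ℝ := fun A =>
    (1 / ((n.choose A.card : ℝ) * (n - A.card))) * ∑ j ∈ Aᶜ, (F A - F (insert j A)) with hf
  have huniv : f Finset.univ = 0 := by
    simp [hf, Finset.compl_univ (α := Fin n)]
  have h1 : ∑ A ∈ (Finset.univ : Finset (Fin n)).powerset.filter (· ≠ Finset.univ), f A
      = ∑ A ∈ (Finset.univ : Finset (Fin n)).powerset, f A := by
    apply Finset.sum_filter_of_ne
    intro A _ hne
    intro hA; exact hne (hA ▸ huniv)
  rw [h1, Finset.sum_powerset]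
  have hcard : (Finset.univ : Finset (Fin n)).card = n := by simp
  rw [hcard]
  set T : ℕ → ℝ := fun m => (∑ A ∈ powersetCard m (univ : Finset (Fin n)), F A) / (n.choose m)
    with hT
  have hstep : ∀ m < n, ∑ A ∈ powersetCard m (univ : Finset (Fin n)), f A = T m - T (m+1) := by
    intro m hm
    have hmn : m ≤ n := hm.le
    have hc0 : (n.choose m : ℝ) ≠ 0 := Nat.cast_ne_zero.2 (Nat.choose_pos hmn).ne'
    have hc1 : (n.choose (m+1) : ℝ) ≠ 0 := Nat.cast_ne_zero.2 (Nat.choose_pos hm).ne'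
    have hnm : ((n : ℝ) - m) = ((n - m : ℕ) : ℝ) := by
      rw [Nat.cast_sub hmn]
    have hnm0 : ((n - m : ℕ) : ℝ) ≠ 0 := by
      have := Nat.sub_pos_of_lt hm
      positivity
    have hfA : ∀ A ∈ powersetCard m (univ : Finset (Fin n)),
        f A = (1 / ((n.choose m : ℝ) * ((n - m : ℕ) : ℝ))) *
          (((n - m : ℕ) : ℝ) * F A - ∑ j ∈ Aᶜ, F (insert j A)) := by
      intro A hA
      have hAm : A.card = m := (Finset.mem_powersetCard.1 hA).2
      have hcompl : (Aᶜ : Finset (Fin n)).card = n - m := by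
        rw [Finset.card_compl, hAm]; simp
      rw [hf]
      simp only [hAm]
      rw [Finset.sum_sub_distrib, Finset.sum_const, hcompl, hnm]
      simp [nsmul_eq_mul]
    rw [Finset.sum_congr rfl hfA, ← Finset.mul_sum, Finset.sum_sub_distrib, ← Finset.mul_sum,
      dbl_count F]
    have hchoose : ((n.choose (m+1) : ℝ)) * ((m:ℝ)+1) = (n.choose m : ℝ) * ((n - m : ℕ) : ℝ) := by
      exact_mod_cast Nat.choose_succ_right_eq n m
    rw [hT]
    have key : ((m:ℝ)+1)/((n.choose m : ℝ) * ((n - m : ℕ) : ℝ)) = 1/(n.choose (m+1) : ℝ) := by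
      rw [div_eq_div_iff (by positivity) hc1]
      linarith [hchoose]
    rw [mul_sub]
    have e1 : (1 / ((n.choose m : ℝ) * ((n - m : ℕ) : ℝ))) *
        (((n - m : ℕ) : ℝ) * ∑ A ∈ powersetCard m (univ : Finset (Fin n)), F A)
        = (∑ A ∈ powersetCard m (univ : Finset (Fin n)), F A) / (n.choose m : ℝ) := by
      have hd : (n:ℝ) - (m:ℝ) ≠ 0 := by rw [hnm]; exact hnm0
      field_simp
    have e2 : (1 / ((n.choose m : ℝ) * ((n - m : ℕ) : ℝ))) *
        (((m:ℝ)+1) * ∑ B ∈ powersetCard (m+1) (univ : Finset (Fin n)), F B)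
        = (∑ B ∈ powersetCard (m+1) (univ : Finset (Fin n)), F B) / (n.choose (m+1) : ℝ) := by
      rw [← mul_assoc, mul_comm (1 / ((n.choose m : ℝ) * ((n - m : ℕ) : ℝ))) (((m:ℝ)+1)),
        mul_one_div, key]
      ring
    push_cast at e2 ⊢
    rw [e1, e2]
  rw [Finset.sum_range_succ]
  have hlast : ∑ A ∈ powersetCard n (univ : Finset (Fin n)), f A = 0 := by
    have : powersetCard n (univ : Finset (Fin n)) = {Finset.univ} := by
      have h2 := Finset.powersetCard_self (univ : Finset (Fin n))
      rwa [hcard] at h2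
    rw [this, Finset.sum_singleton, huniv]
  rw [hlast, add_zero, Finset.sum_congr rfl (fun m hm => hstep m (Finset.mem_range.1 hm)),
    Finset.sum_range_sub' T]
  have hT0 : T 0 = F ∅ := by
    simp [hT, Finset.powersetCard_zero]
  have hTn : T n = F Finset.univ := by
    have : powersetCard n (univ : Finset (Fin n)) = {Finset.univ} := by
      have h2 := Finset.powersetCard_self (univ : Finset (Fin n))
      rwa [hcard] at h2
    simp [hT, this]
  rw [hT0, hTn]

section Aux

open MeasureTheory ProbabilityTheory

lemma integrable_mul_of_memL2 {α : Type*} [MeasurableSpace α] {μ : MeasureTheory.Measure α}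
    {f g : α → ℝ} (hf : MemLp f 2 μ) (hg : MemLp g 2 μ) :
    Integrable (fun x => f x * g x) μ := by
  have h1 : MemLp (f • g) 1 μ := hg.smul hf
  have h2 := memLp_one_iff_integrable.mp h1
  exact h2

lemma integral_sub_sub_add {α : Type*} [MeasurableSpace α] {μ : MeasureTheory.Measure α}
    {a b c d : α → ℝ}
    (ha : Integrable a μ) (hb : Integrable b μ) (hc : Integrable c μ) (hd : Integrable d μ) :
    ∫ x, (a x - b x - c x + d x) ∂μ
      = (∫ x, a x ∂μ) - (∫ x, b x ∂μ) - (∫ x, c x ∂μ) + ∫ x, d x ∂μ := by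
  have h1 : Integrable (fun x => a x - b x) μ := ha.sub hb
  have h2 : Integrable (fun x => a x - b x - c x) μ := h1.sub hc
  rw [integral_add h2 hd, integral_sub h1 hc, integral_sub ha hb]

variable {𝒳 : Type*} [m𝒳 : MeasurableSpace 𝒳] {n : ℕ}

/-- The equivalence of `Fin n ⊕ Fin n` swapping `inl i` and `inr i` for `i ∈ B`. -/
def swapEquiv (B : Finset (Fin n)) : (Fin n ⊕ Fin n) ≃ (Fin n ⊕ Fin n) where
  toFun := Sum.elim (fun i => if i ∈ B then .inr i else .inl i)
    (fun i => if i ∈ B then .inl i else .inr i)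
  invFun := Sum.elim (fun i => if i ∈ B then .inr i else .inl i)
    (fun i => if i ∈ B then .inl i else .inr i)
  left_inv := by rintro (i | i) <;> by_cases h : i ∈ B <;> simp [h]
  right_inv := by rintro (i | i) <;> by_cases h : i ∈ B <;> simp [h]

/-- Select coordinates: from a full configuration `y` on `Fin n ⊕ Fin n`, build the
configuration on `Fin n` using the `inr` values on `A` and the `inl` values elsewhere. -/
def sel (A : Finset (Fin n)) (y : Fin n ⊕ Fin n → 𝒳) : Fin n → 𝒳 :=
  fun i => if i ∈ A then y (.inr i) else y (.inl i)

lemma measurable_sel (A : Finset (Fin n)) : Measurable (sel (𝒳 := 𝒳) A) := by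
  apply measurable_pi_lambda
  intro i
  unfold sel
  split <;> exact measurable_pi_apply _

lemma sel_swap {A B : Finset (Fin n)} (hAB : Disjoint A B) (y : Fin n ⊕ Fin n → 𝒳) :
    sel A (fun s => y (swapEquiv B s)) = sel (A ∪ B) y := by
  funext i
  by_cases hA : i ∈ A
  · have hB : i ∉ B := Finset.disjoint_left.1 hAB hA
    simp [sel, swapEquiv, hA, hB]
  · by_cases hB : i ∈ B <;> simp [sel, swapEquiv, hA, hB]

end Aux

open MeasureTheory ProbabilityTheory

/-- Resampling covariance identity: for `X = (X_1,…,X_n)` with independent coordinates and `X'` an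
independent copy, and square-integrable `g, h` of `X`,
`Cov(g(X), h(X)) = (1/2) ∑_{A ⊊ [n]} k_{n,A} ∑_{j ∉ A} E[Δ_j g(X) · Δ_j h(X^A)]`,
where `X^A` replaces the coordinates in `A` by those of `X'` and
`k_{n,A} = 1/(C(n,|A|)(n−|A|))`. -/
theorem covariance_resampling_identity {Ω : Type*} {𝒳 : Type*} [MeasurableSpace Ω]
    [m𝒳 : MeasurableSpace 𝒳] {μ : Measure Ω} [IsProbabilityMeasure μ]
    {n : ℕ} (X X' : Fin n → Ω → 𝒳)
    (hX : ∀ i, Measurable (X i)) (hX' : ∀ i, Measurable (X' i))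
    (hindep : iIndepFun (Sum.elim X X') μ)
    (hid : ∀ i, IdentDistrib (X' i) (X i) μ μ)
    (g h : (Fin n → 𝒳) → ℝ) (hg : Measurable g) (hh : Measurable h)
    (hg2 : MemLp (fun ω => g (fun i => X i ω)) 2 μ)
    (hh2 : MemLp (fun ω => h (fun i => X i ω)) 2 μ)
    (XA : Finset (Fin n) → Ω → Fin n → 𝒳)
    (hXA : ∀ A ω i, XA A ω i = if i ∈ A then X' i ω else X i ω) :
    (∫ ω, g (fun i => X i ω) * h (fun i => X i ω) ∂μ) -
        (∫ ω, g (fun i => X i ω) ∂μ) * ∫ ω, h (fun i => X i ω) ∂μ =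
      (1 / 2) * ∑ A ∈ (Finset.univ : Finset (Fin n)).powerset.filter (· ≠ Finset.univ),
        (1 / ((n.choose A.card : ℝ) * (n - A.card))) *
          ∑ j ∈ Aᶜ, ∫ ω, (g (fun i => X i ω) - g (XA {j} ω)) *
            (h (XA A ω) - h (XA (insert j A) ω)) ∂μ := by
  classical
  -- the coordinate measures and the product measure on the canonical space
  set ν : Fin n ⊕ Fin n → Measure 𝒳 := fun s => μ.map (Sum.elim X X' s) with hνdef
  have hmeas : ∀ s, Measurable (Sum.elim X X' s) := by rintro (i | i); exacts [hX i, hX' i]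
  haveI hprob : ∀ s, IsProbabilityMeasure (ν s) :=
    fun s => Measure.isProbabilityMeasure_map (hmeas s).aemeasurable
  set ρ : Measure (Fin n ⊕ Fin n → 𝒳) := Measure.pi ν with hρdef
  haveI : IsProbabilityMeasure ρ := by rw [hρdef]; infer_instance
  set Z : Ω → (Fin n ⊕ Fin n → 𝒳) := fun ω s => Sum.elim X X' s ω with hZdef
  have hZm : Measurable Z := measurable_pi_lambda _ hmeas
  have hmap : μ.map Z = ρ := by
    rw [hρdef]
    refine (Measure.pi_eq fun E hE => ?_).symm
    rw [Measure.map_apply hZm (MeasurableSet.univ_pi hE)]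
    have hpre : Z ⁻¹' Set.pi Set.univ E
        = ⋂ s ∈ (Finset.univ : Finset (Fin n ⊕ Fin n)), Sum.elim X X' s ⁻¹' E s := by
      ext ω; simp [Set.mem_pi, hZdef]
    rw [hpre, hindep.measure_inter_preimage_eq_mul Finset.univ (fun s _ => hE s)]
    exact Finset.prod_congr rfl fun s _ => (Measure.map_apply (hmeas s) (hE s)).symm
  -- symmetry of the coordinate measures
  have hbase : ∀ i, ν (.inr i) = ν (.inl i) := fun i => (hid i).map_eq
  have hνswap : ∀ (B : Finset (Fin n)) s, ν (swapEquiv B s) = ν s := by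
    rintro B (i | i) <;> by_cases hiB : i ∈ B <;>
      simp [swapEquiv, hiB, hbase i]
  -- the swapping measurable equivalences are measure preserving
  set TB : Finset (Fin n) → ((Fin n ⊕ Fin n → 𝒳) ≃ᵐ (Fin n ⊕ Fin n → 𝒳)) :=
    fun B => MeasurableEquiv.piCongrLeft (fun _ => 𝒳) (swapEquiv B) with hTBdef
  have hTB : ∀ B, ⇑(TB B) = fun y s => y (swapEquiv B s) := by
    intro B
    funext y s
    rw [hTBdef]
    simp only [MeasurableEquiv.coe_piCongrLeft]
    have hs : s = swapEquiv B (swapEquiv B s) := ((swapEquiv B).left_inv s).symm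
    conv_lhs => rw [hs]
    exact Equiv.piCongrLeft_apply_apply _ _ _ _
  have hpres : ∀ B : Finset (Fin n), MeasurePreserving (TB B) ρ ρ := by
    intro B
    have h0 := MeasureTheory.measurePreserving_piCongrLeft (α := fun _ : Fin n ⊕ Fin n => 𝒳)
      ν (swapEquiv B)
    have h1 : (Measure.pi fun s => ν (swapEquiv B s)) = ρ := by
      rw [hρdef]; congr 1; funext s; exact hνswap B s
    rw [h1] at h0
    rw [← hρdef] at h0
    exact h0
  have hTBinv : ∀ (B : Finset (Fin n)) y, TB B (TB B y) = y := by
    intro B y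
    rw [hTB]
    funext s
    exact congrArg y ((swapEquiv B).left_inv s)
  -- composition identities for `sel`
  have hsel1 : ∀ (B : Finset (Fin n)) y, sel (∅ : Finset (Fin n)) (TB B y) = sel B y := by
    intro B y
    rw [hTB]
    have := sel_swap (Finset.disjoint_left.2 (by simp)) y (B := B) (A := (∅ : Finset (Fin n)))
    rw [this, Finset.empty_union]
  have hsel2 : ∀ (A : Finset (Fin n)) (j : Fin n), j ∉ A → ∀ y,
      sel A (TB {j} y) = sel (insert j A) y := by
    intro A j hj y
    rw [hTB]
    have hdisj : Disjoint A ({j} : Finset (Fin n)) := by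
      simp [Finset.disjoint_singleton_right, hj]
    have := sel_swap hdisj y
    rw [this]
    congr 1
    rw [Finset.insert_eq, Finset.union_comm]
  have hsel3 : ∀ (A : Finset (Fin n)) (j : Fin n), j ∉ A → ∀ y,
      sel (insert j A) (TB {j} y) = sel A y := by
    intro A j hj y
    have := hsel2 A j hj (TB {j} y)
    rw [hTBinv] at this
    exact this.symm
  -- transfer between Ω and the canonical space
  have hXAeq : ∀ (A : Finset (Fin n)) ω, XA A ω = sel A (Z ω) := by
    intro A ω
    funext i
    rw [hXA]
    by_cases hiA : i ∈ A <;> simp [sel, hZdef, hiA]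
  have hXeq : ∀ ω, (fun i => X i ω) = sel (∅ : Finset (Fin n)) (Z ω) := by
    intro ω; funext i; simp [sel, hZdef]
  have htrans : ∀ φ : (Fin n ⊕ Fin n → 𝒳) → ℝ, Measurable φ →
      ∫ y, φ y ∂ρ = ∫ ω, φ (Z ω) ∂μ := by
    intro φ hφ
    rw [← hmap, integral_map hZm.aemeasurable hφ.aestronglyMeasurable]
  -- square integrability on the canonical space
  have hGmeas : ∀ B : Finset (Fin n), Measurable fun y : Fin n ⊕ Fin n → 𝒳 => g (sel B y) :=
    fun B => hg.comp (measurable_sel B)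
  have hHmeas : ∀ A : Finset (Fin n), Measurable fun y : Fin n ⊕ Fin n → 𝒳 => h (sel A y) :=
    fun A => hh.comp (measurable_sel A)
  have htransfer2 : ∀ (φ : (Fin n → 𝒳) → ℝ), Measurable φ →
      MemLp (fun ω => φ (fun i => X i ω)) 2 μ →
      ∀ B : Finset (Fin n), MemLp (fun y => φ (sel B y)) 2 ρ := by
    intro φ hφ hφ2 B
    have hM : ∀ C : Finset (Fin n), Measurable fun y : Fin n ⊕ Fin n → 𝒳 => φ (sel C y) :=
      fun C => hφ.comp (measurable_sel C)
    have h0 : MemLp (fun y => φ (sel (∅ : Finset (Fin n)) y)) 2 ρ := by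
      rw [← hmap, memLp_map_measure_iff (hM ∅).aestronglyMeasurable hZm.aemeasurable]
      have heq : ((fun y => φ (sel (∅ : Finset (Fin n)) y)) ∘ Z)
          = fun ω => φ (fun i => X i ω) := by
        funext ω
        simp only [Function.comp_apply]
        rw [← hXeq ω]
      rw [heq]
      exact hφ2
    have hcomp : MemLp ((fun y => φ (sel (∅ : Finset (Fin n)) y)) ∘ (TB B)) 2 ρ := by
      rw [← memLp_map_measure_iff (hM ∅).aestronglyMeasurable
        (TB B).measurable.aemeasurable, (hpres B).map_eq]
      exact h0
    have heq2 : ((fun y => φ (sel (∅ : Finset (Fin n)) y)) ∘ (TB B))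
        = fun y => φ (sel B y) := by
      funext y
      simp only [Function.comp_apply]
      rw [hsel1 B y]
    rw [heq2] at hcomp
    exact hcomp
  have hG2 : ∀ B : Finset (Fin n), MemLp (fun y => g (sel B y)) 2 ρ :=
    htransfer2 g hg hg2
  have hH2 : ∀ A : Finset (Fin n), MemLp (fun y => h (sel A y)) 2 ρ :=
    htransfer2 h hh hh2
  have hint : ∀ B A : Finset (Fin n), Integrable (fun y => g (sel B y) * h (sel A y)) ρ :=
    fun B A => integrable_mul_of_memL2 (hG2 B) (hH2 A)
  -- the function F
  set F : Finset (Fin n) → ℝ := fun A => ∫ y, g (sel (∅ : Finset (Fin n)) y) * h (sel A y) ∂ρ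
    with hFdef
  -- swap identities
  have hswapint : ∀ (φ : (Fin n ⊕ Fin n → 𝒳) → ℝ) (B : Finset (Fin n)),
      ∫ y, φ (TB B y) ∂ρ = ∫ y, φ y ∂ρ :=
    fun φ B => (hpres B).integral_comp' φ
  have hs1 : ∀ (A : Finset (Fin n)) (j : Fin n), j ∉ A →
      ∫ y, g (sel {j} y) * h (sel A y) ∂ρ = F (insert j A) := by
    intro A j hj
    simp only [hFdef]
    rw [← hswapint (fun y => g (sel (∅ : Finset (Fin n)) y) * h (sel (insert j A) y)) {j}]
    refine integral_congr_ae (Filter.Eventually.of_forall fun y => ?_)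
    show g (sel {j} y) * h (sel A y)
      = g (sel (∅ : Finset (Fin n)) (TB {j} y)) * h (sel (insert j A) (TB {j} y))
    rw [hsel1 {j} y, hsel3 A j hj y]
  have hs2 : ∀ (A : Finset (Fin n)) (j : Fin n), j ∉ A →
      ∫ y, g (sel {j} y) * h (sel (insert j A) y) ∂ρ = F A := by
    intro A j hj
    simp only [hFdef]
    rw [← hswapint (fun y => g (sel (∅ : Finset (Fin n)) y) * h (sel A y)) {j}]
    refine integral_congr_ae (Filter.Eventually.of_forall fun y => ?_)
    show g (sel {j} y) * h (sel (insert j A) y)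
      = g (sel (∅ : Finset (Fin n)) (TB {j} y)) * h (sel A (TB {j} y))
    rw [hsel1 {j} y, hsel2 A j hj y]
  -- the key pointwise identity
  have hkey : ∀ (A : Finset (Fin n)) (j : Fin n), j ∉ A →
      ∫ y, (g (sel (∅ : Finset (Fin n)) y) - g (sel {j} y)) *
          (h (sel A y) - h (sel (insert j A) y)) ∂ρ
        = 2 * (F A - F (insert j A)) := by
    intro A j hj
    have hexp : (fun y => (g (sel (∅ : Finset (Fin n)) y) - g (sel {j} y)) *
        (h (sel A y) - h (sel (insert j A) y)))
        = fun y => (g (sel (∅ : Finset (Fin n)) y) * h (sel A y)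
            - g (sel (∅ : Finset (Fin n)) y) * h (sel (insert j A) y)
            - g (sel {j} y) * h (sel A y))
            + g (sel {j} y) * h (sel (insert j A) y) := by
      funext y; ring
    rw [hexp, integral_sub_sub_add (hint ∅ A) (hint ∅ (insert j A)) (hint {j} A)
      (hint {j} (insert j A)), hs1 A j hj, hs2 A j hj]
    simp only [hFdef]
    ring
  -- F at ∅
  have hF0 : F ∅ = ∫ ω, g (fun i => X i ω) * h (fun i => X i ω) ∂μ := by
    simp only [hFdef]
    rw [htrans (fun y => g (sel (∅ : Finset (Fin n)) y) * h (sel ∅ y)) ((hGmeas ∅).mul (hHmeas ∅))]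
    refine integral_congr_ae (Filter.Eventually.of_forall fun ω => ?_)
    show g (sel (∅ : Finset (Fin n)) (Z ω)) * h (sel (∅ : Finset (Fin n)) (Z ω))
      = g (fun i => X i ω) * h (fun i => X i ω)
    rw [← hXeq ω]
  -- the marginal laws
  have hXmap : μ.map (fun ω (i : Fin n) => X i ω) = Measure.pi (fun i => ν (.inl i)) := by
    refine (Measure.pi_eq fun E hE => ?_).symm
    rw [Measure.map_apply (measurable_pi_lambda _ hX) (MeasurableSet.univ_pi hE)]
    have hpre : (fun ω (i : Fin n) => X i ω) ⁻¹' Set.pi Set.univ E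
        = ⋂ s ∈ (Finset.univ.map ⟨Sum.inl, Sum.inl_injective⟩ : Finset (Fin n ⊕ Fin n)),
            Sum.elim X X' s ⁻¹' Sum.elim E (fun _ => Set.univ) s := by
      ext ω; simp [Set.mem_pi]
    rw [hpre, hindep.measure_inter_preimage_eq_mul _ (by
      rintro (i | i) hs
      · exact hE i
      · exact MeasurableSet.univ), Finset.prod_map]
    refine Finset.prod_congr rfl fun i _ => ?_
    simp only [Function.Embedding.coeFn_mk, Sum.elim_inl]
    exact (Measure.map_apply (hX i) (hE i)).symm
  have hpil : ∫ x, g x ∂(Measure.pi (fun i => ν (.inl i))) = ∫ ω, g (fun i => X i ω) ∂μ := by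
    rw [← hXmap, integral_map (measurable_pi_lambda _ hX).aemeasurable hg.aestronglyMeasurable]
  have hpir : Measure.pi (fun i : Fin n => ν (.inr i)) = Measure.pi (fun i => ν (.inl i)) := by
    congr 1; funext i; exact hbase i
  have hpilh : ∫ x, h x ∂(Measure.pi (fun i => ν (.inl i))) = ∫ ω, h (fun i => X i ω) ∂μ := by
    rw [← hXmap, integral_map (measurable_pi_lambda _ hX).aemeasurable hh.aestronglyMeasurable]
  -- F at univ
  have hFuniv : F Finset.univ
      = (∫ ω, g (fun i => X i ω) ∂μ) * ∫ ω, h (fun i => X i ω) ∂μ := by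
    simp only [hFdef]
    set Φ : (Fin n ⊕ Fin n → 𝒳) ≃ᵐ ((Fin n → 𝒳) × (Fin n → 𝒳)) :=
      MeasurableEquiv.sumPiEquivProdPi (fun _ => 𝒳) with hΦdef
    have hmp : MeasurePreserving Φ ρ
        ((Measure.pi fun i => ν (.inl i)).prod (Measure.pi fun i => ν (.inr i))) := by
      rw [hρdef]
      exact MeasureTheory.measurePreserving_sumPiEquivProdPi ν
    have hpt : ∀ y : Fin n ⊕ Fin n → 𝒳,
        g (sel (∅ : Finset (Fin n)) y) * h (sel Finset.univ y)
          = (fun p : (Fin n → 𝒳) × (Fin n → 𝒳) => g p.1 * h p.2) (Φ y) := by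
      intro y
      have h1 : sel (∅ : Finset (Fin n)) y = fun i => y (.inl i) := by
        funext i; simp [sel]
      have h2 : sel (Finset.univ : Finset (Fin n)) y = fun i => y (.inr i) := by
        funext i; simp [sel]
      simp only [hΦdef, MeasurableEquiv.coe_sumPiEquivProdPi, Equiv.sumPiEquivProdPi,
        Equiv.coe_fn_mk, h1, h2]
    rw [integral_congr_ae (Filter.Eventually.of_forall hpt),
      hmp.integral_comp' (fun p : (Fin n → 𝒳) × (Fin n → 𝒳) => g p.1 * h p.2),
      integral_prod_mul g h, hpir, hpil, hpilh]
  -- rewrite the summands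
  have hstep1 : ∀ A ∈ (Finset.univ : Finset (Fin n)).powerset.filter (· ≠ Finset.univ),
      (1 / ((n.choose A.card : ℝ) * (n - A.card))) *
          ∑ j ∈ Aᶜ, ∫ ω, (g (fun i => X i ω) - g (XA {j} ω)) *
            (h (XA A ω) - h (XA (insert j A) ω)) ∂μ
        = (1 / ((n.choose A.card : ℝ) * (n - A.card))) *
          ∑ j ∈ Aᶜ, (2 * (F A - F (insert j A))) := by
    intro A _
    congr 1
    refine Finset.sum_congr rfl fun j hj => ?_
    have hjA : j ∉ A := Finset.mem_compl.1 hj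
    have hφm : Measurable fun y : Fin n ⊕ Fin n → 𝒳 =>
        (g (sel (∅ : Finset (Fin n)) y) - g (sel {j} y)) *
          (h (sel A y) - h (sel (insert j A) y)) :=
      ((hGmeas ∅).sub (hGmeas {j})).mul ((hHmeas A).sub (hHmeas (insert j A)))
    have h1 : ∫ ω, (g (fun i => X i ω) - g (XA {j} ω)) *
          (h (XA A ω) - h (XA (insert j A) ω)) ∂μ
        = ∫ y, (g (sel (∅ : Finset (Fin n)) y) - g (sel {j} y)) *
            (h (sel A y) - h (sel (insert j A) y)) ∂ρ := by
      rw [htrans _ hφm]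
      refine integral_congr_ae (Filter.Eventually.of_forall fun ω => ?_)
      show (g (fun i => X i ω) - g (XA {j} ω)) * (h (XA A ω) - h (XA (insert j A) ω))
        = (g (sel (∅ : Finset (Fin n)) (Z ω)) - g (sel {j} (Z ω))) *
            (h (sel A (Z ω)) - h (sel (insert j A) (Z ω)))
      rw [hXAeq {j} ω, hXAeq A ω, hXAeq (insert j A) ω, hXeq ω]
    rw [h1, hkey A j hjA]
  rw [Finset.sum_congr rfl hstep1, ← hF0, ← hFuniv, Finset.mul_sum]
  have hstep2 : ∀ A ∈ (Finset.univ : Finset (Fin n)).powerset.filter (· ≠ Finset.univ),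
      (1 / 2 : ℝ) * ((1 / ((n.choose A.card : ℝ) * (n - A.card))) *
          ∑ j ∈ Aᶜ, (2 * (F A - F (insert j A))))
        = (1 / ((n.choose A.card : ℝ) * (n - A.card))) *
          ∑ j ∈ Aᶜ, (F A - F (insert j A)) := by
    intro A _
    rw [← Finset.mul_sum]
    ring
  rw [Finset.sum_congr rfl hstep2, comb_telescope F]
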